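/- Let p be prime and suppose A ⊆ (Z/p²Z)² is a tiling complement of the non-cyclic Lagrangian H = {(x,y) : px = py = 0}. Then: (a) for any B with (A,B) a tiling pair of (Z/p²Z)², the set A is a symplectic spectrum of B (i.e. |A| = |B| and ΔA ⊆ Z(1̂_B^{sym})); and (b) for any S with (A,S) a symplectic spectral pair with ΔS ⊆ Z(1̂_A^{sym}) or ΔA ⊆ Z(1̂_S^{sym}), the pair (A,S) is a tiling pair. -/

import Mathlib

open Complex

abbrev G (n : ℕ) := ZMod n × ZMod n

def symp {n : ℕ} (x y : G n) : ZMod n := x.1 * y.2 - x.2 * y.1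

noncomputable def sF {n : ℕ} (A : Finset (G n)) (ξ : G n) : ℂ :=
  ∑ a ∈ A, Complex.exp (2 * Real.pi * Complex.I * ((symp a ξ).val : ℂ) / (n : ℂ))

/-- The non-cyclic Lagrangian of `(Z/p²Z)²`. -/
def Hp (p : ℕ) : AddSubgroup (G (p ^ 2)) where
  carrier := {g | p • g = 0}
  zero_mem' := by simp
  add_mem' := by
    intro a b ha hb
    simp only [Set.mem_setOf_eq, smul_add] at *
    rw [ha, hb, add_zero]
  neg_mem' := by
    intro a ha
    simp only [Set.mem_setOf_eq, smul_neg] at *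
    rw [ha, neg_zero]

def IsTilingPairSub {n : ℕ} (A : Finset (G n)) (H : AddSubgroup (G n)) : Prop :=
  ∀ g : G n, ∃! q : G n × G n, (q.1 ∈ A ∧ q.2 ∈ H) ∧ q.1 + q.2 = g

def IsTilingPair {n : ℕ} (A B : Finset (G n)) : Prop :=
  ∀ g : G n, ∃! q : G n × G n, (q.1 ∈ A ∧ q.2 ∈ B) ∧ q.1 + q.2 = g

/-! ### Auxiliary material -/

noncomputable def myω (n : ℕ) : ℂ := Complex.exp (2 * Real.pi * Complex.I / n)

lemma sF_eq (n : ℕ) (A : Finset (G n)) (ξ : G n) :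
    sF A ξ = ∑ a ∈ A, myω n ^ (symp a ξ).val := by
  unfold sF myω
  refine Finset.sum_congr rfl fun a _ => ?_
  rw [← Complex.exp_nat_mul]
  congr 1
  ring

lemma myω_pow_n (n : ℕ) (hn : n ≠ 0) : myω n ^ n = 1 := by
  have := Complex.isPrimitiveRoot_exp n hn
  exact this.pow_eq_one

lemma myω_pow_mod (n : ℕ) (hn : n ≠ 0) (a : ℕ) : myω n ^ (a % n) = myω n ^ a := by
  conv_rhs => rw [← Nat.mod_add_div a n]
  rw [pow_add, pow_mul, myω_pow_n n hn, one_pow, mul_one]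

lemma myω_val_add (n : ℕ) [NeZero n] (x y : ZMod n) :
    myω n ^ (x + y).val = myω n ^ x.val * myω n ^ y.val := by
  rw [← pow_add, ZMod.val_add, myω_pow_mod n (NeZero.ne n)]

lemma myω_abs (n : ℕ) (hn : n ≠ 0) : ‖myω n‖ = 1 := by
  unfold myω
  rw [Complex.norm_exp]
  have : (2 * Real.pi * Complex.I / n).re = 0 := by
    have : (2 * Real.pi * Complex.I / n) = ((2 * Real.pi / n : ℝ) : ℂ) * Complex.I := by
      push_cast; ring
    rw [this]
    simp
  rw [this, Real.exp_zero]

lemma myω_conj_pow (n : ℕ) [NeZero n] (x : ZMod n) :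
    (starRingEnd ℂ) (myω n ^ x.val) = myω n ^ (-x).val := by
  have h1 : ‖myω n ^ x.val‖ = 1 := by
    rw [norm_pow, myω_abs n (NeZero.ne n), one_pow]
  have h2 : myω n ^ x.val * myω n ^ (-x).val = 1 := by
    rw [← myω_val_add, add_neg_cancel, ZMod.val_zero, pow_zero]
  rw [← Complex.inv_eq_conj h1, inv_eq_of_mul_eq_one_right h2]

lemma myω_pow_ne_one (n : ℕ) [NeZero n] (x : ZMod n) (hx : x ≠ 0) : myω n ^ x.val ≠ 1 := by
  have hprim := Complex.isPrimitiveRoot_exp n (NeZero.ne n)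
  intro h
  have := (IsPrimitiveRoot.pow_eq_one_iff_dvd hprim x.val).mp h
  have hlt := ZMod.val_lt x
  have hv : x.val ≠ 0 := fun h => hx (by rwa [ZMod.val_eq_zero] at h)
  have := Nat.le_of_dvd (Nat.pos_of_ne_zero hv) this
  omega

/-- reduction map `(Z/p²)² → (Z/p)²`. -/
def pr (p : ℕ) (g : G (p ^ 2)) : ZMod p × ZMod p :=
  (ZMod.castHom (dvd_pow_self p two_ne_zero) (ZMod p) g.1,
   ZMod.castHom (dvd_pow_self p two_ne_zero) (ZMod p) g.2)

lemma pr_sub (p : ℕ) (x y : G (p ^ 2)) : pr p (x - y) = pr p x - pr p y := by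
  simp only [pr, Prod.fst_sub, Prod.snd_sub, map_sub, Prod.mk_sub_mk]

lemma mem_Hp_iff (p : ℕ) (hp : p.Prime) (g : G (p ^ 2)) : g ∈ Hp p ↔ pr p g = 0 := by
  haveI : NeZero (p ^ 2) := ⟨pow_ne_zero 2 hp.ne_zero⟩
  have key : ∀ m : ℕ, (p ^ 2 ∣ p * m ↔ p ∣ m) := fun m => by
    rw [pow_two]; exact mul_dvd_mul_iff_left (hp.ne_zero : p ≠ 0)
  have comp : ∀ x : ZMod (p ^ 2),
      (p • x = 0 ↔ ZMod.castHom (dvd_pow_self p two_ne_zero) (ZMod p) x = 0) := by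
    intro x
    rw [nsmul_eq_mul, ZMod.castHom_apply, ← ZMod.natCast_val, ZMod.natCast_eq_zero_iff]
    have hx : (p : ZMod (p ^ 2)) * x = ((p * x.val : ℕ) : ZMod (p ^ 2)) := by
      push_cast [ZMod.natCast_val, ZMod.cast_id]; ring
    rw [hx, ZMod.natCast_eq_zero_iff, key]
  have hmem : g ∈ Hp p ↔ p • g = 0 := Iff.rfl
  rw [hmem]
  constructor
  · intro h
    have h1 := congrArg Prod.fst h
    have h2 := congrArg Prod.snd h
    simp only [Prod.smul_fst, Prod.smul_snd, Prod.fst_zero, Prod.snd_zero] at h1 h2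
    exact Prod.ext ((comp g.1).mp h1) ((comp g.2).mp h2)
  · intro h
    have h1 := congrArg Prod.fst h
    have h2 := congrArg Prod.snd h
    simp only [pr, Prod.fst_zero, Prod.snd_zero] at h1 h2
    exact Prod.ext (by simpa using (comp g.1).mpr h1) (by simpa using (comp g.2).mpr h2)

lemma transversal (p : ℕ) (hp : p.Prime) (A : Finset (G (p ^ 2)))
    (hA : IsTilingPairSub A (Hp p)) :
    ∀ x : ZMod p × ZMod p, ∃! a, a ∈ A ∧ pr p a = x := by
  haveI : NeZero (p ^ 2) := ⟨pow_ne_zero 2 hp.ne_zero⟩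
  haveI : NeZero p := ⟨hp.ne_zero⟩
  intro x
  set g : G (p ^ 2) := ((x.1.val : ZMod (p ^ 2)), (x.2.val : ZMod (p ^ 2))) with hg
  have hpg : pr p g = x := by
    have e1 : ((x.1.val : ZMod p)) = x.1 := by rw [ZMod.natCast_val, ZMod.cast_id]
    have e2 : ((x.2.val : ZMod p)) = x.2 := by rw [ZMod.natCast_val, ZMod.cast_id]
    simp only [pr, hg, map_natCast, e1, e2]
  obtain ⟨⟨a, h⟩, ⟨⟨haA, hh⟩, hsum⟩, huniq⟩ := hA g
  have h0 : pr p h = 0 := (mem_Hp_iff p hp h).mp hh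
  have hga : g - h = a := by rw [← hsum]; abel
  have hpa : pr p a = x := by rw [← hga, pr_sub, h0, hpg, sub_zero]
  refine ⟨a, ⟨haA, hpa⟩, ?_⟩
  intro a' ⟨ha'A, hpa'⟩
  obtain ⟨⟨b, k⟩, ⟨⟨hbA, hk⟩, hbk⟩, huniq2⟩ := hA a'
  have e1 : ((a', 0) : G (p ^ 2) × G (p ^ 2)) = (b, k) :=
    huniq2 (a', 0) ⟨⟨ha'A, (Hp p).zero_mem⟩, by simp⟩
  have hmem : a' - a ∈ Hp p := by
    rw [mem_Hp_iff p hp, pr_sub, hpa', hpa, sub_self]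
  have e2 : ((a, a' - a) : G (p ^ 2) × G (p ^ 2)) = (b, k) :=
    huniq2 (a, a' - a) ⟨⟨haA, hmem⟩, by rw [add_comm]; exact sub_add_cancel a' a⟩
  exact congrArg Prod.fst (e1.trans e2.symm)

lemma card_A (p : ℕ) (hp : p.Prime) (A : Finset (G (p ^ 2)))
    (hA : IsTilingPairSub A (Hp p)) : A.card = p ^ 2 := by
  haveI : NeZero p := ⟨hp.ne_zero⟩
  have ht := transversal p hp A hA
  have h1 : A.card = (Finset.univ : Finset (ZMod p × ZMod p)).card := by
    refine Finset.card_bij (fun a _ => pr p a) (fun a ha => Finset.mem_univ _) ?_ ?_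
    · intro a ha b hb hab
      obtain ⟨c, hc, hu⟩ := ht (pr p a)
      exact (hu a ⟨ha, rfl⟩).trans (hu b ⟨hb, hab.symm⟩).symm
    · intro x _
      obtain ⟨a, ⟨ha, hpa⟩, _⟩ := ht x
      exact ⟨a, ha, hpa⟩
  rw [h1, Finset.card_univ, Fintype.card_prod, ZMod.card]; ring

lemma fiber_count (p : ℕ) [NeZero p] (hp : p.Prime) (e : ZMod p × ZMod p) (he : e ≠ 0) (t : ZMod p) :
    (Finset.univ.filter (fun x : ZMod p × ZMod p => x.1 * e.2 - x.2 * e.1 = t)).card = p := by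
  haveI : Fact p.Prime := ⟨hp⟩
  by_cases h2 : e.2 = 0
  · have h1 : e.1 ≠ 0 := by
      intro h1; exact he (Prod.ext h1 h2)
    have : (Finset.univ.filter (fun x : ZMod p × ZMod p => x.1 * e.2 - x.2 * e.1 = t)).card
        = (Finset.univ : Finset (ZMod p)).card := by
      refine Finset.card_bij' (fun x _ => x.1) (fun y _ => (y, (y * e.2 - t) * e.1⁻¹)) ?_ ?_ ?_ ?_
      · intro x hx
        exact Finset.mem_univ _
      · intro y _
        simp only [Finset.mem_filter, Finset.mem_univ, true_and]
        field_simp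
        ring
      · intro x hx
        simp only [Finset.mem_filter, Finset.mem_univ, true_and] at hx
        refine Prod.ext rfl ?_
        field_simp
        linear_combination hx
      · intro y _
        rfl
    rw [this, Finset.card_univ, ZMod.card]
  · have : (Finset.univ.filter (fun x : ZMod p × ZMod p => x.1 * e.2 - x.2 * e.1 = t)).card
        = (Finset.univ : Finset (ZMod p)).card := by
      refine Finset.card_bij' (fun x _ => x.2) (fun y _ => ((t + y * e.1) * e.2⁻¹, y)) ?_ ?_ ?_ ?_
      · intro x hx
        exact Finset.mem_univ _
      · intro y _
        simp only [Finset.mem_filter, Finset.mem_univ, true_and]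
        field_simp
        ring
      · intro x hx
        simp only [Finset.mem_filter, Finset.mem_univ, true_and] at hx
        refine Prod.ext ?_ rfl
        field_simp
        linear_combination -hx
      · intro y _
        rfl
    rw [this, Finset.card_univ, ZMod.card]

lemma A_fiber (p : ℕ) (hp : p.Prime) (A : Finset (G (p ^ 2)))
    (hA : IsTilingPairSub A (Hp p)) (d : G (p ^ 2)) (hd : pr p d ≠ 0) (t : ZMod p) :
    (A.filter (fun a => ((symp a d).val : ZMod p) = t)).card = p := by
  haveI : NeZero (p ^ 2) := ⟨pow_ne_zero 2 hp.ne_zero⟩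
  haveI : NeZero p := ⟨hp.ne_zero⟩
  have ht := transversal p hp A hA
  have hconv : ∀ a : G (p ^ 2),
      ((symp a d).val : ZMod p) = (pr p a).1 * (pr p d).2 - (pr p a).2 * (pr p d).1 := by
    intro a
    have : ((symp a d).val : ZMod p)
        = ZMod.castHom (dvd_pow_self p two_ne_zero) (ZMod p) (symp a d) := by
      rw [ZMod.natCast_val, ZMod.castHom_apply]
    rw [this]
    simp only [symp, map_sub, map_mul, pr]
  have hbij : (A.filter (fun a => ((symp a d).val : ZMod p) = t)).card
      = (Finset.univ.filter
          (fun x : ZMod p × ZMod p => x.1 * (pr p d).2 - x.2 * (pr p d).1 = t)).card := by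
    refine Finset.card_bij (fun a _ => pr p a) ?_ ?_ ?_
    · intro a ha
      rw [Finset.mem_filter] at ha ⊢
      exact ⟨Finset.mem_univ _, by rw [← hconv a]; exact ha.2⟩
    · intro a ha b hb hab
      rw [Finset.mem_filter] at ha hb
      obtain ⟨c, hc, hu⟩ := ht (pr p a)
      exact (hu a ⟨ha.1, rfl⟩).trans (hu b ⟨hb.1, hab.symm⟩).symm
    · intro x hx
      rw [Finset.mem_filter] at hx
      obtain ⟨a, ⟨ha, hpa⟩, _⟩ := ht x
      refine ⟨a, ?_, hpa⟩
      rw [Finset.mem_filter]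
      exact ⟨ha, by rw [hconv a, hpa]; exact hx.2⟩
  rw [hbij, fiber_count p hp (pr p d) hd t]

open Polynomial in
lemma key_lemma (p : ℕ) (hp : p.Prime) (A : Finset (G (p ^ 2)))
    (hA : IsTilingPairSub A (Hp p)) {a₁ a₂ : G (p ^ 2)}
    (h₁ : a₁ ∈ A) (h₂ : a₂ ∈ A) (hne : a₁ ≠ a₂) : sF A (a₁ - a₂) ≠ 0 := by
  haveI : NeZero (p ^ 2) := ⟨pow_ne_zero 2 hp.ne_zero⟩
  haveI : NeZero p := ⟨hp.ne_zero⟩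
  have hp2 := hp.two_le
  set d : G (p ^ 2) := a₁ - a₂ with hd
  have ht := transversal p hp A hA
  have hdne : pr p d ≠ 0 := by
    intro h
    rw [hd, pr_sub, sub_eq_zero] at h
    obtain ⟨c, hc, hu⟩ := ht (pr p a₂)
    exact hne ((hu a₁ ⟨h₁, h⟩).trans (hu a₂ ⟨h₂, rfl⟩).symm)
  intro h0
  classical
  set c : G (p ^ 2) → ℕ := fun a => (symp a d).val with hcdef
  set P : ℚ[X] := ∑ a ∈ A, X ^ c a with hPdef
  have hclt : ∀ a, c a < p ^ 2 := fun a => ZMod.val_lt _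
  have hω := Complex.isPrimitiveRoot_exp (p ^ 2) (NeZero.ne _)
  have haev : Polynomial.aeval (myω (p ^ 2)) P = sF A d := by
    rw [hPdef, map_sum, sF_eq]
    refine Finset.sum_congr rfl fun a _ => ?_
    rw [map_pow, Polynomial.aeval_X]
  have hdvd : cyclotomic (p ^ 2) ℚ ∣ P := by
    rw [Polynomial.cyclotomic_eq_minpoly_rat hω (by positivity)]
    exact minpoly.dvd ℚ _ (haev.trans h0)
  obtain ⟨Q, hPQ⟩ := hdvd
  have hcoeff : ∀ k, P.coeff k = ((A.filter (fun a => c a = k)).card : ℚ) := by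
    intro k
    have hfc : (A.filter (fun a => k = c a)) = (A.filter (fun a => c a = k)) :=
      Finset.filter_congr (fun a _ => eq_comm)
    rw [hPdef, finset_sum_coeff]
    simp only [coeff_X_pow]
    rw [Finset.sum_boole, hfc]
  have hsymp_eq : symp a₁ d = symp a₂ d := by
    have h' : symp a₁ d - symp a₂ d = symp d d := by
      rw [hd]
      simp only [symp, Prod.fst_sub, Prod.snd_sub]
      ring
    have h'' : symp d d = 0 := by simp only [symp]; ring
    rw [h'', sub_eq_zero] at h'
    exact h'
  set k₀ : ℕ := c a₁ with hk₀def
  have hk₀lt : k₀ < p ^ 2 := hclt a₁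
  have h2le : 2 ≤ (A.filter (fun a => c a = k₀)).card := by
    have hsub : ({a₁, a₂} : Finset (G (p ^ 2))) ⊆ A.filter (fun a => c a = k₀) := by
      intro x hx
      rcases Finset.mem_insert.mp hx with h | h
      · refine Finset.mem_filter.mpr ⟨by rw [h]; exact h₁, by rw [h]⟩
      · rw [Finset.mem_singleton] at h
        refine Finset.mem_filter.mpr ⟨by rw [h]; exact h₂, ?_⟩
        rw [h]
        show (symp a₂ d).val = k₀
        rw [hk₀def]
        show (symp a₂ d).val = (symp a₁ d).val
        rw [hsymp_eq]
    calc 2 = ({a₁, a₂} : Finset (G (p ^ 2))).card := (Finset.card_pair hne).symm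
    _ ≤ _ := Finset.card_le_card hsub
  have hQne : Q ≠ 0 := by
    rintro rfl
    rw [mul_zero] at hPQ
    have := hcoeff k₀
    rw [hPQ, Polynomial.coeff_zero] at this
    have : (A.filter (fun a => c a = k₀)).card = 0 := by exact_mod_cast this.symm
    omega
  have hdegP : P.natDegree ≤ p ^ 2 - 1 := by
    rw [natDegree_le_iff_coeff_eq_zero]
    intro m hm
    rw [hcoeff]
    have : A.filter (fun a => c a = m) = ∅ := by
      rw [Finset.filter_eq_empty_iff]
      intro a _
      have := hclt a
      omega
    rw [this, Finset.card_empty, Nat.cast_zero]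
  have hdegΦ : (cyclotomic (p ^ 2) ℚ).natDegree = p ^ 2 - p := by
    rw [natDegree_cyclotomic, Nat.totient_prime_pow hp (by norm_num)]
    have hple : p ≤ p ^ 2 := Nat.le_self_pow two_ne_zero p
    zify [hple, show 1 ≤ p by omega]
    ring
  have hdegQ : Q.natDegree < p := by
    have he : (cyclotomic (p ^ 2) ℚ).natDegree + Q.natDegree = P.natDegree := by
      rw [← natDegree_mul (cyclotomic_ne_zero _ ℚ) hQne, ← hPQ]
    have hple : p ≤ p ^ 2 := Nat.le_self_pow two_ne_zero p
    rw [hdegΦ] at he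
    have h1 : p ^ 2 - p + Q.natDegree ≤ p ^ 2 - 1 := he ▸ hdegP
    have h2' : p ^ 2 - p + p = p ^ 2 := Nat.sub_add_cancel hple
    have h3' : p ^ 2 - 1 + 1 = p ^ 2 := Nat.sub_add_cancel (le_trans (by omega) hple)
    omega
  have hco : ∀ r s : ℕ, r < p → s < p → P.coeff (r + p * s) = Q.coeff r := by
    intro r s hr hs
    have hcyc : cyclotomic (p ^ 2) ℚ = ∑ i ∈ Finset.range p, (X : ℚ[X]) ^ (p * i) := by
      have h1 : cyclotomic (p ^ 2) ℚ = ∑ i ∈ Finset.range p, ((X : ℚ[X]) ^ p) ^ i := by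
        simpa using Polynomial.cyclotomic_prime_pow_eq_geom_sum (R := ℚ) (n := 1) hp
      rw [h1]
      exact Finset.sum_congr rfl fun i _ => (pow_mul X p i).symm
    rw [hPQ, hcyc, Finset.sum_mul, finset_sum_coeff]
    have hterm : ∀ i ∈ Finset.range p,
        ((X : ℚ[X]) ^ (p * i) * Q).coeff (r + p * s) =
          if i = s then Q.coeff r else 0 := by
      intro i hi
      rw [Finset.mem_range] at hi
      rw [mul_comm, coeff_mul_X_pow']
      by_cases his : i = s
      · subst his
        rw [if_pos (by omega), if_pos rfl]
        congr 1
        omega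
      · rw [if_neg his]
        rcases Nat.lt_or_ge i s with h | h
        · have hmul : p * i + p ≤ p * s := by
            have := Nat.mul_le_mul_left p (show i + 1 ≤ s by omega)
            rwa [Nat.mul_add, Nat.mul_one] at this
          rw [if_pos (by omega)]
          apply Polynomial.coeff_eq_zero_of_natDegree_lt
          omega
        · have hgt : s < i := by omega
          have hmul : p * s + p ≤ p * i := by
            have := Nat.mul_le_mul_left p (show s + 1 ≤ i by omega)
            rwa [Nat.mul_add, Nat.mul_one] at this
          rw [if_neg (by omega)]
    rw [Finset.sum_congr rfl hterm, Finset.sum_ite_eq' (Finset.range p) s (fun _ => Q.coeff r),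
      if_pos (Finset.mem_range.mpr hs)]
  set r₀ : ℕ := k₀ % p with hr₀def
  set s₀ : ℕ := k₀ / p with hs₀def
  have hr₀lt : r₀ < p := Nat.mod_lt _ (by omega)
  have hs₀lt : s₀ < p := by
    apply Nat.div_lt_of_lt_mul
    rw [← pow_two]
    exact hk₀lt
  have hk₀eq : r₀ + p * s₀ = k₀ := Nat.mod_add_div k₀ p
  have hQ2 : (2 : ℚ) ≤ Q.coeff r₀ := by
    rw [← hco r₀ s₀ hr₀lt hs₀lt, hk₀eq, hcoeff]
    exact_mod_cast h2le
  -- partition the fiber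
  have hpart : A.filter (fun a => c a % p = r₀)
      = (Finset.range p).biUnion (fun s => A.filter (fun a => c a = r₀ + p * s)) := by
    ext a
    simp only [Finset.mem_filter, Finset.mem_biUnion, Finset.mem_range]
    constructor
    · rintro ⟨ha, hmod⟩
      have hdiv : c a % p + p * (c a / p) = c a := Nat.mod_add_div _ _
      have hlt : c a / p < p := by
        apply Nat.div_lt_of_lt_mul
        rw [← pow_two]
        exact hclt a
      exact ⟨c a / p, hlt, ha, by omega⟩
    · rintro ⟨s, hs, ha, hceq⟩
      refine ⟨ha, ?_⟩
      rw [hceq, Nat.add_mul_mod_self_left, Nat.mod_eq_of_lt hr₀lt]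
  have hdisj : ∀ s1 ∈ Finset.range p, ∀ s2 ∈ Finset.range p, s1 ≠ s2 →
      Disjoint (A.filter (fun a => c a = r₀ + p * s1)) (A.filter (fun a => c a = r₀ + p * s2)) := by
    intro s1 _ s2 _ hss
    rw [Finset.disjoint_left]
    intro a ha1 ha2
    rw [Finset.mem_filter] at ha1 ha2
    have e1 := ha1.2
    have e2 := ha2.2
    rw [e1] at e2
    have hps : p * s1 = p * s2 := by omega
    exact hss (Nat.eq_of_mul_eq_mul_left (by omega) hps)
  have hcount : (A.filter (fun a => c a % p = r₀)).card
      = ∑ s ∈ Finset.range p, (A.filter (fun a => c a = r₀ + p * s)).card := by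
    rw [hpart, Finset.card_biUnion hdisj]
  -- the modular fiber has cardinality p
  have hfib : (A.filter (fun a => c a % p = r₀)).card = p := by
    have hcond : ∀ a : G (p ^ 2),
        (c a % p = r₀) ↔ (((symp a d).val : ZMod p) = (r₀ : ZMod p)) := by
      intro a
      rw [ZMod.natCast_eq_natCast_iff]
      show c a % p = r₀ ↔ c a ≡ r₀ [MOD p]
      unfold Nat.ModEq
      rw [Nat.mod_eq_of_lt hr₀lt]
    rw [Finset.filter_congr (fun a _ => by rw [hcond a])]
    exact A_fiber p hp A hA d hdne (r₀ : ZMod p)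
  -- combine
  have hsum : (p : ℚ) * Q.coeff r₀ = (p : ℚ) := by
    have h1 : ∑ s ∈ Finset.range p, P.coeff (r₀ + p * s) = (p : ℚ) * Q.coeff r₀ := by
      rw [Finset.sum_congr rfl (fun s hs => hco r₀ s hr₀lt (Finset.mem_range.mp hs))]
      rw [Finset.sum_const, Finset.card_range, nsmul_eq_mul]
    have h2 : ∑ s ∈ Finset.range p, P.coeff (r₀ + p * s) = (p : ℚ) := by
      rw [Finset.sum_congr rfl (fun s _ => hcoeff (r₀ + p * s)), ← Nat.cast_sum, ← hcount, hfib]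
    rw [← h1, h2]
  nlinarith [hQ2, hsum, show (2 : ℚ) ≤ (p : ℚ) by exact_mod_cast hp2]

lemma symp_add_left {n : ℕ} (x y z : G n) : symp (x + y) z = symp x z + symp y z := by
  simp only [symp, Prod.fst_add, Prod.snd_add]; ring

lemma symp_sub_left {n : ℕ} (x y z : G n) : symp (x - y) z = symp x z - symp y z := by
  simp only [symp, Prod.fst_sub, Prod.snd_sub]; ring

lemma symp_anti {n : ℕ} (x y : G n) : symp x y = -symp y x := by
  simp only [symp]; ring

lemma symp_zero_right {n : ℕ} (x : G n) : symp x 0 = 0 := by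
  simp [symp]

lemma char_sum_zero (p : ℕ) [NeZero (p ^ 2)] (hp : p.Prime) (d : G (p ^ 2)) (hd : d ≠ 0) :
    ∑ g : G (p ^ 2), myω (p ^ 2) ^ (symp g d).val = 0 := by
  obtain ⟨g₀, hg₀⟩ : ∃ g₀ : G (p ^ 2), symp g₀ d ≠ 0 := by
    by_cases h1 : d.1 = 0
    · have h2 : d.2 ≠ 0 := fun h2 => hd (Prod.ext h1 h2)
      exact ⟨(1, 0), by simpa [symp] using h2⟩
    · exact ⟨(0, -1), by simpa [symp] using h1⟩
  have hshift : (∑ g : G (p ^ 2), myω (p ^ 2) ^ (symp g d).val)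
      = myω (p ^ 2) ^ (symp g₀ d).val * ∑ g : G (p ^ 2), myω (p ^ 2) ^ (symp g d).val := by
    conv_lhs => rw [← Equiv.sum_comp (Equiv.addRight g₀) (fun g => myω (p ^ 2) ^ (symp g d).val)]
    simp only [Equiv.coe_addRight]
    rw [Finset.sum_congr rfl (fun g (_ : g ∈ Finset.univ) =>
      show myω (p ^ 2) ^ (symp (g + g₀) d).val
          = myω (p ^ 2) ^ (symp g₀ d).val * myω (p ^ 2) ^ (symp g d).val from by
        rw [symp_add_left, myω_val_add, mul_comm])]
    rw [← Finset.mul_sum]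
  have hne1 : myω (p ^ 2) ^ (symp g₀ d).val ≠ 1 := myω_pow_ne_one _ _ hg₀
  by_contra hS0
  exact hne1 (mul_right_cancel₀ hS0 (by rw [one_mul, ← hshift])).symm

lemma tiling_card (n : ℕ) [NeZero n] (A B : Finset (G n)) (hAB : IsTilingPair A B) :
    A.card * B.card = Fintype.card (G n) := by
  classical
  have h : (A ×ˢ B).card = (Finset.univ : Finset (G n)).card := by
    refine Finset.card_bij (fun q _ => q.1 + q.2) (fun q _ => Finset.mem_univ _) ?_ ?_
    · intro q hq q' hq' hsum
      rw [Finset.mem_product] at hq hq'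
      obtain ⟨w, _, hu⟩ := hAB (q.1 + q.2)
      exact (hu q ⟨⟨hq.1, hq.2⟩, rfl⟩).trans (hu q' ⟨⟨hq'.1, hq'.2⟩, hsum.symm⟩).symm
    · intro g _
      obtain ⟨q, ⟨⟨hq1, hq2⟩, hq3⟩, _⟩ := hAB g
      exact ⟨q, Finset.mem_product.mpr ⟨hq1, hq2⟩, hq3⟩
  rw [← Finset.card_product, h, Finset.card_univ]

lemma tiling_prod (p : ℕ) [NeZero (p ^ 2)] (hp : p.Prime) (A B : Finset (G (p ^ 2)))
    (hAB : IsTilingPair A B) (ξ : G (p ^ 2)) :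
    sF A ξ * sF B ξ = ∑ g : G (p ^ 2), myω (p ^ 2) ^ (symp g ξ).val := by
  classical
  rw [sF_eq, sF_eq, Finset.sum_mul_sum]
  have h1 : ∀ a ∈ A, ∀ b ∈ B, myω (p ^ 2) ^ (symp a ξ).val * myω (p ^ 2) ^ (symp b ξ).val
      = myω (p ^ 2) ^ (symp (a + b) ξ).val := by
    intro a _ b _
    rw [symp_add_left, myω_val_add]
  rw [Finset.sum_congr rfl (fun a ha => Finset.sum_congr rfl (fun b hb => h1 a ha b hb)),
    ← Finset.sum_product']
  refine Finset.sum_bij (fun q _ => q.1 + q.2) (fun q _ => Finset.mem_univ _) ?_ ?_ ?_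
  · intro q hq q' hq' hsum
    rw [Finset.mem_product] at hq hq'
    obtain ⟨w, _, hu⟩ := hAB (q.1 + q.2)
    exact (hu q ⟨⟨hq.1, hq.2⟩, rfl⟩).trans (hu q' ⟨⟨hq'.1, hq'.2⟩, hsum.symm⟩).symm
  · intro g _
    obtain ⟨q, ⟨⟨hq1, hq2⟩, hq3⟩, _⟩ := hAB g
    exact ⟨q, Finset.mem_product.mpr ⟨hq1, hq2⟩, hq3⟩
  · intro q _
    rfl

set_option maxHeartbeats 1000000 in
lemma flip_lemma (p : ℕ) (hp : p.Prime) (A S : Finset (G (p ^ 2)))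
    (hcard : A.card = S.card) (hApos : 0 < A.card)
    (h2 : ∀ a ∈ A, ∀ a' ∈ A, a ≠ a' → sF S (a - a') = 0) :
    ∀ s ∈ S, ∀ s' ∈ S, s ≠ s' → sF A (s - s') = 0 := by
  haveI : NeZero (p ^ 2) := ⟨pow_ne_zero 2 hp.ne_zero⟩
  classical
  have hcard' : Fintype.card ↑A = Fintype.card ↑S := by
    rw [Fintype.card_coe, Fintype.card_coe, hcard]
  set σ : ↑A ≃ ↑S := Fintype.equivOfCardEq hcard' with hσ
  set e : ZMod (p ^ 2) → ℂ := fun x => myω (p ^ 2) ^ x.val with he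
  have he_add : ∀ x y, e (x + y) = e x * e y := fun x y => myω_val_add _ x y
  have he_conj : ∀ x, (starRingEnd ℂ) (e x) = e (-x) := fun x => myω_conj_pow _ x
  set M : Matrix ↑A ↑A ℂ := fun a a' => e (symp (↑(σ a') : G (p ^ 2)) ↑a) with hM
  have hMMH : M * M.conjTranspose = (A.card : ℂ) • 1 := by
    ext a a'
    rw [Matrix.mul_apply]
    have hterm : ∀ a'' : ↑A, M a a'' * M.conjTranspose a'' a'
        = e (symp (↑(σ a'') : G (p ^ 2)) (↑a - ↑a')) := by
      intro a''
      rw [Matrix.conjTranspose_apply, hM]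
      show e (symp _ ↑a) * (starRingEnd ℂ) (e (symp _ ↑a')) = _
      rw [he_conj, ← he_add]
      congr 1
      simp only [symp, Prod.fst_sub, Prod.snd_sub]
      ring
    rw [Finset.sum_congr rfl (fun a'' _ => hterm a'')]
    have hsum : ∑ a'' : ↑A, e (symp (↑(σ a'') : G (p ^ 2)) (↑a - ↑a'))
        = ∑ s ∈ S, e (symp s (↑a - ↑a')) := by
      rw [Equiv.sum_comp σ (fun s : ↑S => e (symp (↑s : G (p ^ 2)) (↑a - ↑a')))]
      exact Finset.sum_coe_sort S (fun s => e (symp s (↑a - ↑a')))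
    rw [hsum]
    by_cases haa : a = a'
    · subst haa
      have : ∀ s ∈ S, e (symp s ((↑a : G (p ^ 2)) - ↑a)) = 1 := by
        intro s _
        rw [sub_self, symp_zero_right, he]
        simp [ZMod.val_zero]
      rw [Finset.sum_congr rfl this, Finset.sum_const, Matrix.smul_apply, Matrix.one_apply_eq,
        smul_eq_mul, mul_one, ← hcard]
      simp
    · have hxy : (↑a : G (p ^ 2)) ≠ ↑a' := fun h => haa (Subtype.ext h)
      have h0 : sF S ((↑a : G (p ^ 2)) - ↑a') = 0 := h2 ↑a a.2 ↑a' a'.2 hxy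
      rw [sF_eq] at h0
      rw [Matrix.smul_apply, Matrix.one_apply_ne haa, smul_eq_mul, mul_zero]
      exact h0
  have hcne : (A.card : ℂ) ≠ 0 := Nat.cast_ne_zero.mpr hApos.ne'
  have hMHM : M.conjTranspose * M = (A.card : ℂ) • 1 := by
    have h1 : M * ((A.card : ℂ)⁻¹ • M.conjTranspose) = 1 := by
      rw [Matrix.mul_smul, hMMH, smul_smul, inv_mul_cancel₀ hcne, one_smul]
    have h2' := mul_eq_one_comm.mp h1
    calc M.conjTranspose * M
        = (A.card : ℂ) • (((A.card : ℂ)⁻¹ • M.conjTranspose) * M) := by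
          rw [Matrix.smul_mul, smul_smul, mul_inv_cancel₀ hcne, one_smul]
      _ = (A.card : ℂ) • 1 := by rw [h2']
  intro s hs s' hs' hss
  set a₁ : ↑A := σ.symm ⟨s, hs⟩ with ha₁
  set a₂ : ↑A := σ.symm ⟨s', hs'⟩ with ha₂
  have hane : a₁ ≠ a₂ := by
    intro h
    apply hss
    have := congrArg σ h
    rw [Equiv.apply_symm_apply, Equiv.apply_symm_apply] at this
    exact congrArg Subtype.val this
  have hentry : (M.conjTranspose * M) a₁ a₂ = sF A (s - s') := by
    rw [Matrix.mul_apply, sF_eq]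
    have hterm : ∀ a'' : ↑A, M.conjTranspose a₁ a'' * M a'' a₂
        = e (symp (↑a'' : G (p ^ 2)) (s - s')) := by
      intro a''
      rw [Matrix.conjTranspose_apply, hM]
      show (starRingEnd ℂ) (e (symp (↑(σ a₁) : G (p ^ 2)) ↑a'')) * e (symp (↑(σ a₂) : G (p ^ 2)) ↑a'') = _
      rw [he_conj, ← he_add]
      congr 1
      rw [ha₁, ha₂, Equiv.apply_symm_apply, Equiv.apply_symm_apply]
      show -symp s ↑a'' + symp s' ↑a'' = symp (↑a'' : G (p ^ 2)) (s - s')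
      simp only [symp, Prod.fst_sub, Prod.snd_sub]
      ring
    rw [Finset.sum_congr rfl (fun a'' _ => hterm a'')]
    exact Finset.sum_coe_sort A (fun x => e (symp x (s - s')))
  rw [hMHM, Matrix.smul_apply, Matrix.one_apply_ne hane, smul_eq_mul, mul_zero] at hentry
  exact hentry.symm

/-- If `A` complements the non-cyclic Lagrangian of `(Z/p²Z)²`, then `A` is a symplectic
spectrum for each of its tiling complements, and a tiling complement for each of its
symplectic spectra. -/
theorem stmt18 (p : ℕ) (hp : p.Prime) (A : Finset (G (p ^ 2)))
    (hA : IsTilingPairSub A (Hp p)) :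
    (∀ B : Finset (G (p ^ 2)), IsTilingPair A B →
      A.card = B.card ∧ ∀ a ∈ A, ∀ a' ∈ A, a ≠ a' → sF B (a - a') = 0) ∧
    (∀ S : Finset (G (p ^ 2)), A.card = S.card →
      ((∀ s ∈ S, ∀ s' ∈ S, s ≠ s' → sF A (s - s') = 0) ∨
       (∀ a ∈ A, ∀ a' ∈ A, a ≠ a' → sF S (a - a') = 0)) →
      IsTilingPair A S) := by
  haveI : NeZero (p ^ 2) := ⟨pow_ne_zero 2 hp.ne_zero⟩
  have hp2 := hp.two_le
  have hcardA : A.card = p ^ 2 := card_A p hp A hA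
  have hcardG : Fintype.card (G (p ^ 2)) = p ^ 2 * p ^ 2 := by
    rw [Fintype.card_prod, ZMod.card]
  constructor
  · intro B hB
    have hprod := tiling_card (p ^ 2) A B hB
    have hcardB : B.card = p ^ 2 := by
      rw [hcardA, hcardG] at hprod
      exact Nat.eq_of_mul_eq_mul_left (by positivity) hprod
    refine ⟨by rw [hcardA, hcardB], ?_⟩
    intro a ha a' ha' hne
    have hkey := key_lemma p hp A hA ha ha' hne
    have hd0 : a - a' ≠ 0 := sub_ne_zero.mpr hne
    have hzero : sF A (a - a') * sF B (a - a') = 0 :=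
      (tiling_prod p hp A B hB (a - a')).trans (char_sum_zero p hp _ hd0)
    rcases mul_eq_zero.mp hzero with h | h
    · exact absurd h hkey
    · exact h
  · intro S hcardS hor
    have hcase1 : ∀ s ∈ S, ∀ s' ∈ S, s ≠ s' → sF A (s - s') = 0 := by
      rcases hor with h | h
      · exact h
      · exact flip_lemma p hp A S hcardS (by rw [hcardA]; positivity) h
    classical
    have hinj : ∀ q ∈ A ×ˢ S, ∀ q' ∈ A ×ˢ S,
        q.1 + q.2 = q'.1 + q'.2 → q = q' := by
      intro q hq q' hq' hsum
      rw [Finset.mem_product] at hq hq'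
      by_cases ha : q.1 = q'.1
      · have h2 : q.1 + q.2 = q.1 + q'.2 := by rw [hsum, ha]
        exact Prod.ext ha (add_left_cancel h2)
      · exfalso
        have hkey := key_lemma p hp A hA hq.1 hq'.1 ha
        have hs : q'.2 ≠ q.2 := by
          intro h
          apply ha
          have h2 : q.1 + q.2 = q'.1 + q.2 := by rw [hsum, h]
          exact add_right_cancel h2
        have hz := hcase1 q'.2 hq'.2 q.2 hq.2 hs
        have heq : q.1 - q'.1 = q'.2 - q.2 := by
          rw [sub_eq_sub_iff_add_eq_add]
          exact hsum.trans (add_comm _ _)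
        rw [heq] at hkey
        exact hkey hz
    have hcardAS : (Finset.univ : Finset (G (p ^ 2))).card ≤ (A ×ˢ S).card := by
      rw [Finset.card_product, Finset.card_univ, hcardG, ← hcardS, hcardA]
    intro g
    obtain ⟨q, hqmem, hq⟩ := Finset.surj_on_of_inj_on_of_card_le
      (fun q (_ : q ∈ A ×ˢ S) => q.1 + q.2) (fun q _ => Finset.mem_univ _)
      (fun q q' hq hq' h => hinj q hq q' hq' h) hcardAS g (Finset.mem_univ g)
    rw [Finset.mem_product] at hqmem
    refine ⟨q, ⟨⟨hqmem.1, hqmem.2⟩, hq.symm⟩, ?_⟩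
    intro q' hq'
    obtain ⟨⟨h1, h2⟩, h3⟩ := hq'
    exact hinj q' (Finset.mem_product.mpr ⟨h1, h2⟩) q (Finset.mem_product.mpr hqmem)
      (h3.trans hq)
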